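/- arXiv:1103.2511 — 3 statements merged into one kernel-verified Lean document; each statement's English description precedes it below -/
import Mathlib

section
/- If X is an 𝒳-projective complex, then each component X_n is an 𝒳-projective R-module. -/
open CategoryTheory CategoryTheory.Limits

/-- The category of cochain complexes of `R`-modules indexed by `ℤ`. -/
abbrev Cx (R : Type) [Ring R] := CochainComplex (ModuleCat.{0} R) ℤ

variable {R : Type} [Ring R]

/-- `C` is an `𝒳`-complex: every component lies in the class `𝒳`. -/
def IsXCx (𝒳 : Set (ModuleCat.{0} R)) (C : Cx R) : Prop := ∀ n : ℤ, C.X n ∈ 𝒳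

/-- `P` is an `𝒳`-projective module: maps from `P` lift along surjections with kernel in `𝒳`. -/
def XProjMod (𝒳 : Set (ModuleCat.{0} R)) (P : ModuleCat.{0} R) : Prop :=
  ∀ (A B : ModuleCat.{0} R) (p : A ⟶ B), Function.Surjective p →
    ModuleCat.of R (LinearMap.ker p.hom) ∈ 𝒳 →
    ∀ h : P ⟶ B, ∃ g : P ⟶ A, g ≫ p = h

/-- `E` is an `𝒳`-injective module: maps into `E` extend along injections with cokernel in `𝒳`. -/
def XInjMod (𝒳 : Set (ModuleCat.{0} R)) (E : ModuleCat.{0} R) : Prop :=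
  ∀ (A B : ModuleCat.{0} R) (i : A ⟶ B), Function.Injective i →
    ModuleCat.of R (↥B ⧸ LinearMap.range i.hom) ∈ 𝒳 →
    ∀ f : A ⟶ E, ∃ g : B ⟶ E, i ≫ g = f

/-- `C` is an `𝒳`-projective complex: chain maps from `C` lift along surjective chain maps
whose kernel complex has all components in `𝒳`. -/
def XProjCx (𝒳 : Set (ModuleCat.{0} R)) (C : Cx R) : Prop :=
  ∀ (A B : Cx R) (φ : A ⟶ B), (∀ n, Function.Surjective (φ.f n)) →
    (∀ n, ModuleCat.of R (LinearMap.ker (φ.f n).hom) ∈ 𝒳) →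
    ∀ f : C ⟶ B, ∃ h : C ⟶ A, h ≫ φ = f

/-- `C` is an `𝒳`-injective complex: chain maps into `C` extend along injective chain maps
whose cokernel complex has all components in `𝒳`. -/
def XInjCx (𝒳 : Set (ModuleCat.{0} R)) (C : Cx R) : Prop :=
  ∀ (A B : Cx R) (φ : A ⟶ B), (∀ n, Function.Injective (φ.f n)) →
    (∀ n, ModuleCat.of R (↥(B.X n) ⧸ LinearMap.range (φ.f n).hom) ∈ 𝒳) →
    ∀ f : A ⟶ C, ∃ g : B ⟶ C, φ ≫ g = f

/-- The complex `... → 0 → A →(f) B → 0 → ...` with `A` in degree 0 and `B` in degree 1. -/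
noncomputable def DblMap {A B : ModuleCat.{0} R} (f : A ⟶ B) : Cx R where
  X n := if n = 0 then A else if n = 1 then B else ModuleCat.of R PUnit
  d i j :=
    if h : i = 0 ∧ j = 1 then
      eqToHom (by rw [h.1]; simp) ≫ f ≫ eqToHom (by rw [h.2]; simp)
    else 0
  shape i j hij := by
    try dsimp only
    rw [dif_neg]
    rintro ⟨rfl, rfl⟩
    exact hij rfl
  d_comp_d' i j k _ _ := by
    try dsimp only
    by_cases h : i = 0 ∧ j = 1
    · obtain ⟨rfl, rfl⟩ := h
      rw [dif_neg (show ¬((1:ℤ) = 0 ∧ k = 1) by omega), comp_zero]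
    · rw [dif_neg h, zero_comp]

/-- The complex `... → 0 → P →(id) P → 0 → ...` (`P` in degrees 0 and 1, identity differential). -/
noncomputable def Dbl (P : ModuleCat.{0} R) : Cx R := DblMap (𝟙 P)

/-- Membership in `ε₁`: exact complexes all of whose kernels lie in `𝒳`. -/
def Eps1 (𝒳 : Set (ModuleCat.{0} R)) (E : Cx R) : Prop :=
  (∀ n : ℤ, E.ExactAt n) ∧ ∀ n : ℤ, ModuleCat.of R (LinearMap.ker (E.d n (n+1)).hom) ∈ 𝒳

/-- `Ext¹(A, C) = 0` in the category of complexes: every short exact sequence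
`0 → C → W → A → 0` of complexes splits. -/
def Ext1IsZero (A C : Cx R) : Prop :=
  ∀ (W : Cx R) (i : C ⟶ W) (p : W ⟶ A),
    (∀ n, Function.Injective (i.f n)) → (∀ n, Function.Surjective (p.f n)) →
    (∀ n, LinearMap.range (i.f n).hom = LinearMap.ker (p.f n).hom) →
    ∃ r : W ⟶ C, i ≫ r = 𝟙 C

/-- A complex is bounded if its components vanish outside finitely many degrees. -/
def Bounded (C : Cx R) : Prop := ∃ a b : ℤ, ∀ n : ℤ, (n < a ∨ b < n) → Limits.IsZero (C.X n)

/-- Auxiliary: constant complex with `M` in every degree and identity differential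
from degree `n-1` to `n`, zero elsewhere. -/
def ConstCx (n : ℤ) (M : ModuleCat.{0} R) : Cx R where
  X _ := M
  d i j := if i = n - 1 ∧ j = n then 𝟙 M else 0
  shape i j hij := by
    rw [if_neg]
    rintro ⟨h1, h2⟩
    exact hij (show i + 1 = j by omega)
  d_comp_d' i j k hij hjk := by
    by_cases h : i = n - 1 ∧ j = n
    · have h2 := h.2
      rw [if_neg (show ¬(j = n - 1 ∧ k = n) by rintro ⟨h1, _⟩; omega), comp_zero]
    · rw [if_neg h, zero_comp]

/-- Auxiliary: the chain map between constant complexes induced by `p`. -/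
def ConstMap (n : ℤ) {A B : ModuleCat.{0} R} (p : A ⟶ B) :
    ConstCx n A ⟶ ConstCx n B where
  f _ := p
  comm' i j _ := by
    dsimp [ConstCx]
    split
    · simp
    · simp

/-- Each component of an `𝒳`-projective complex is an `𝒳`-projective module. -/
theorem stmt6 (𝒳 : Set (ModuleCat.{0} R)) (X : Cx R) (hX : XProjCx 𝒳 X) :
    ∀ n : ℤ, XProjMod 𝒳 (X.X n) := by
  intro n A B p hsurj hker h
  -- package `h` as a chain map `X ⟶ ConstCx n B`
  let ψ : X ⟶ ConstCx n B :=
    { f := fun m => if hm : m = n then eqToHom (by rw [hm]) ≫ h else X.d m n ≫ h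
      comm' := by
        intro i j hij
        have hij' : i + 1 = j := hij
        dsimp [ConstCx]
        by_cases hcase : i = n - 1 ∧ j = n
        · obtain ⟨rfl, rfl⟩ := hcase
          rw [if_pos ⟨rfl, rfl⟩, dif_neg (by omega), dif_pos rfl]
          simp
        · rw [if_neg hcase, comp_zero]
          have hjn : j ≠ n := by
            intro hj
            exact hcase ⟨by omega, hj⟩
          rw [dif_neg hjn, ← Category.assoc, HomologicalComplex.d_comp_d, zero_comp] }
  obtain ⟨g, hg⟩ := hX (ConstCx n A) (ConstCx n B) (ConstMap n p)
    (fun _ => hsurj) (fun _ => hker) ψ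
  refine ⟨g.f n, ?_⟩
  have := congrArg (fun q : X ⟶ ConstCx n B => q.f n) hg
  simp only [HomologicalComplex.comp_f] at this
  rw [show (ConstMap n p).f n = p from rfl] at this
  refine this.trans ?_
  simp [ψ]
  exact Category.id_comp h
end

section
/- There exists a complex X with all components 𝒳-injective modules that is not an 𝒳-injective complex. Specifically, if R is an injective module over itself, f : R → R is an injective R-homomorphism, and g : R → R is a nonzero homomorphism with g ∘ f = 0, then the two-term complex 0 → R →(f) R → 0 with injective (hence 𝒳-injective) components fails to be an 𝒳-injective complex. -/
open CategoryTheory CategoryTheory.Limits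

variable {R : Type} [Ring R]

noncomputable def dblHom {A B A' B' : ModuleCat.{0} R} (f : A ⟶ B) (f' : A' ⟶ B')
    (α : A ⟶ A') (β : B ⟶ B') (h : f ≫ β = α ≫ f') : DblMap f ⟶ DblMap f' where
  f n := match n with
    | 0 => α
    | 1 => β
    | _ => 0
  comm' i j hij := by
    simp only [ComplexShape.up_Rel] at hij
    subst hij
    by_cases hi : i = 0
    · subst hi
      show α ≫ (DblMap f').d 0 1 = (DblMap f).d 0 1 ≫ β
      show α ≫ f' = f ≫ β
      exact h.symm
    · have h1 : (DblMap f).d i (i+1) = 0 := by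
        simp only [DblMap]
        exact dif_neg (by rintro ⟨rfl, -⟩; exact hi rfl)
      have h2 : (DblMap f').d i (i+1) = 0 := by
        simp only [DblMap]
        exact dif_neg (by rintro ⟨rfl, -⟩; exact hi rfl)
      rw [h1, h2, zero_comp, comp_zero]

lemma dblHom_f_zero {A B A' B' : ModuleCat.{0} R} (f : A ⟶ B) (f' : A' ⟶ B')
    (α : A ⟶ A') (β : B ⟶ B') (h : f ≫ β = α ≫ f') : (dblHom f f' α β h).f 0 = α := rfl

lemma dblHom_f_one {A B A' B' : ModuleCat.{0} R} (f : A ⟶ B) (f' : A' ⟶ B')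
    (α : A ⟶ A') (β : B ⟶ B') (h : f ≫ β = α ≫ f') : (dblHom f f' α β h).f 1 = β := rfl

lemma xinj_R (hR : Module.Injective R R) :
    XInjMod (Set.univ : Set (ModuleCat.{0} R)) (ModuleCat.of R R) := by
  intro A B i hi _ f
  obtain ⟨h, hh⟩ := hR.out i.hom hi f.hom
  exact ⟨ModuleCat.ofHom h, ModuleCat.hom_ext (LinearMap.ext hh)⟩

lemma xinj_punit : XInjMod (Set.univ : Set (ModuleCat.{0} R)) (ModuleCat.of R PUnit) := by
  intro A B i hi _ f
  exact ⟨0, ModuleCat.hom_ext (LinearMap.ext fun x => Subsingleton.elim _ _)⟩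

/-- If `R` is self-injective, `f : R → R` is injective and `g : R → R` is nonzero
with `g ∘ f = 0`, then the complex `0 → R →(f) R → 0` has all components `𝒳`-injective
(`𝒳 = ` all modules) but is not an `𝒳`-injective complex. -/
theorem stmt7 (hR : Module.Injective R R) (f g : R →ₗ[R] R)
    (hf : Function.Injective f) (hg : g ≠ 0) (hgf : g ∘ₗ f = 0) :
    (∀ n : ℤ, XInjMod (Set.univ : Set (ModuleCat.{0} R))
      ((DblMap (ModuleCat.ofHom f)).X n)) ∧
    ¬ XInjCx (Set.univ : Set (ModuleCat.{0} R)) (DblMap (ModuleCat.ofHom f)) := by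
  constructor
  · intro n
    by_cases h0 : n = 0
    · subst h0; exact xinj_R hR
    · by_cases h1 : n = 1
      · subst h1; exact xinj_R hR
      · have : (DblMap (ModuleCat.ofHom f)).X n = ModuleCat.of R PUnit := by
          simp [DblMap, h0, h1]
        rw [this]; exact xinj_punit
  · intro hXI
    have hzcomm : (0 : ModuleCat.of R PUnit ⟶ ModuleCat.of R R) ≫ 𝟙 (ModuleCat.of R R) =
        (0 : ModuleCat.of R PUnit ⟶ ModuleCat.of R R) ≫ 𝟙 (ModuleCat.of R R) := rfl
    have hsub : ∀ n : ℤ, n ≠ 1 →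
        Subsingleton ((DblMap (0 : ModuleCat.of R PUnit ⟶ ModuleCat.of R R)).X n) := by
      intro n hn
      by_cases h0 : n = 0
      · subst h0; exact inferInstanceAs (Subsingleton PUnit)
      · have : (DblMap (0 : ModuleCat.of R PUnit ⟶ ModuleCat.of R R)).X n =
            ModuleCat.of R PUnit := by simp [DblMap, h0, hn]
        rw [this]; exact inferInstanceAs (Subsingleton PUnit)
    have hinj : ∀ n, Function.Injective
        ((dblHom (0 : ModuleCat.of R PUnit ⟶ ModuleCat.of R R) (𝟙 (ModuleCat.of R R))
          0 (𝟙 _) hzcomm).f n) := by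
      intro n
      by_cases h1 : n = 1
      · subst h1
        rw [dblHom_f_one]
        exact fun a b h => h
      · have := hsub n h1
        exact Function.injective_of_subsingleton _
    obtain ⟨ρ, hρ⟩ := hXI (DblMap (0 : ModuleCat.of R PUnit ⟶ ModuleCat.of R R))
      (DblMap (𝟙 (ModuleCat.of R R)))
      (dblHom _ _ 0 (𝟙 _) hzcomm) hinj (fun n => Set.mem_univ _)
      (dblHom (0 : ModuleCat.of R PUnit ⟶ ModuleCat.of R R) (ModuleCat.ofHom f)
        0 (𝟙 _) (by simp))
    have e := congrArg (fun t => HomologicalComplex.Hom.f t 1) hρ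
    have r1 : ((dblHom (0 : ModuleCat.of R PUnit ⟶ ModuleCat.of R R) (𝟙 (ModuleCat.of R R))
          0 (𝟙 _) hzcomm) ≫ ρ).f 1
        = (dblHom (0 : ModuleCat.of R PUnit ⟶ ModuleCat.of R R) (𝟙 (ModuleCat.of R R))
          0 (𝟙 _) hzcomm).f 1 ≫ ρ.f 1 := rfl
    have e2 := congrArg
      (fun t : ((DblMap (0 : ModuleCat.of R PUnit ⟶ ModuleCat.of R R)).X 1 ⟶
          (DblMap (ModuleCat.ofHom f)).X 1) => (show R →ₗ[R] R from (t).hom)) (r1.symm.trans e)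
    have s1 : (show R →ₗ[R] R from
        ((dblHom (0 : ModuleCat.of R PUnit ⟶ ModuleCat.of R R) (𝟙 (ModuleCat.of R R))
          0 (𝟙 _) hzcomm).f 1 ≫ ρ.f 1).hom) = (show R →ₗ[R] R from (ρ.f 1).hom) := rfl
    have s2 : (show R →ₗ[R] R from
        ((dblHom (0 : ModuleCat.of R PUnit ⟶ ModuleCat.of R R) (ModuleCat.ofHom f)
          0 (𝟙 _) (by simp)).f 1).hom) = LinearMap.id := rfl
    have h1 : (show R →ₗ[R] R from (ρ.f 1).hom) = LinearMap.id := s1.symm.trans (e2.trans s2)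
    have c1 : (show R →ₗ[R] R from (ρ.f 0 ≫ (DblMap (ModuleCat.ofHom f)).d 0 1).hom)
        = f ∘ₗ (show R →ₗ[R] R from (ρ.f 0).hom) := rfl
    have c2 : (show R →ₗ[R] R from ((DblMap (𝟙 (ModuleCat.of R R))).d 0 1 ≫ ρ.f 1).hom)
        = (show R →ₗ[R] R from (ρ.f 1).hom) := rfl
    have e3 := congrArg
      (fun t : ((DblMap (𝟙 (ModuleCat.of R R))).X 0 ⟶ (DblMap (ModuleCat.ofHom f)).X 1) =>
        (show R →ₗ[R] R from (t).hom)) (ρ.comm 0 1)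
    have hc : f ∘ₗ (show R →ₗ[R] R from (ρ.f 0).hom) = (show R →ₗ[R] R from (ρ.f 1).hom) :=
      c1.symm.trans (e3.trans c2)
    have hfsurj : Function.Surjective f := fun y =>
      ⟨(show R →ₗ[R] R from (ρ.f 0).hom) y,
        (LinearMap.congr_fun hc y).trans (LinearMap.congr_fun h1 y)⟩
    apply hg
    refine LinearMap.ext fun y => ?_
    obtain ⟨x, hx⟩ := hfsurj y
    rw [← hx]
    exact LinearMap.congr_fun hgf x
end

section
/- Let X and I be complexes of R-modules. If Ext^1(X, I[n]) = 0 in the category of complexes for all integers n, then the Hom-complex 𝓗om(X, I) is exact. -/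
open CategoryTheory CategoryTheory.Limits

variable {R : Type} [Ring R]

set_option maxHeartbeats 1000000 in
open CochainComplex CochainComplex.mappingCone in
open CochainComplex.HomComplex in
/-- If `Ext¹(X, I[n]) = 0` in the category of complexes for all `n`, then the
internal Hom-complex `𝓗om(X, I)` is exact. -/
theorem stmt12 (X I : Cx R) (h : ∀ n : ℤ, Ext1IsZero X (I⟦n⟧)) :
    ∀ (n : ℤ) (z : Cochain X I (n + 1)), δ (n + 1) (n + 2) z = 0 →
      ∃ y : Cochain X I n, δ n (n + 1) y = z := by
  intro n z hz
  classical
  set Z : Cocycle X I (n + 1) := Cocycle.mk z (n + 2) (by omega) hz with hZdef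
  set ZL : Cocycle (X⟦(-1:ℤ)⟧) I n := Z.leftShift (-1) n (by omega) with hZLdef
  set ZS : Cocycle (X⟦(-1:ℤ)⟧) (I⟦n⟧) 0 := ZL.rightShift n 0 (by omega) with hZSdef
  set ψ : X⟦(-1:ℤ)⟧ ⟶ I⟦n⟧ := Cocycle.homOf ZS with hψdef
  set K := mappingCone ψ with hKdef
  set i : I⟦n⟧ ⟶ K := inr ψ with hidef
  set P : Cocycle K X 0 := (fst ψ).rightUnshift 0 (by omega) with hPdef
  set p : K ⟶ X := Cocycle.homOf P with hpdef
  have hpf : ∀ k : ℤ, p.f k = (fst ψ).1.v k (k + 1) rfl ≫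
      (X.shiftFunctorObjXIso (-1) (k + 1) k (by omega)).hom := by
    intro k
    simp only [hpdef, Cocycle.homOf_f, hPdef, Cocycle.rightUnshift_coe]
    rw [Cochain.rightUnshift_v _ 0 (by omega) k k (add_zero k) (k + 1) rfl]
  -- injectivity of i
  have hinj : ∀ k : ℤ, Function.Injective (i.f k) := by
    intro k a b hab
    have h1 := ConcreteCategory.congr_hom (inr_f_snd_v ψ k) a
    have h2 := ConcreteCategory.congr_hom (inr_f_snd_v ψ k) b
    simp only [ConcreteCategory.comp_apply] at h1 h2
    have : (𝟙 ((I⟦n⟧).X k) : _ ⟶ _) a = (𝟙 ((I⟦n⟧).X k) : _ ⟶ _) b := by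
      rw [← h1, ← h2]; exact congrArg _ hab
    exact this
  -- surjectivity of p
  have hsurj : ∀ k : ℤ, Function.Surjective (p.f k) := by
    intro k
    have hsec : ((X.shiftFunctorObjXIso (-1) (k + 1) k (by omega)).inv ≫
        (inl ψ).v (k + 1) k (by omega)) ≫ p.f k = 𝟙 (X.X k) := by
      rw [hpf k]
      simp only [Category.assoc]
      rw [reassoc_of% (inl_v_fst_v ψ (k + 1) k rfl)]
      exact Iso.inv_hom_id _
    intro b
    refine ⟨((X.shiftFunctorObjXIso (-1) (k + 1) k (by omega)).inv ≫
        (inl ψ).v (k + 1) k (by omega)) b, ?_⟩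
    have h1 := ConcreteCategory.congr_hom hsec b
    simp only [ConcreteCategory.comp_apply] at h1
    simpa using h1
  -- exactness
  have hcomp : ∀ k : ℤ, i.f k ≫ p.f k = 0 := by
    intro k
    rw [hpf k, hidef, ← Category.assoc]
    rw [inr_f_fst_v ψ k (k + 1) rfl]
    exact zero_comp
  have hex : ∀ k : ℤ, LinearMap.range (i.f k).hom = LinearMap.ker (p.f k).hom := by
    intro k
    apply le_antisymm
    · rintro _ ⟨a, rfl⟩
      have h1 := ConcreteCategory.congr_hom (hcomp k) a
      simp only [ConcreteCategory.comp_apply] at h1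
      rw [LinearMap.mem_ker]; exact h1
    · intro x hx
      have hfst : (fst ψ).1.v k (k + 1) rfl x = 0 := by
        have hx' : p.f k x = 0 := hx
        rw [hpf k] at hx'
        have h2 : (X.shiftFunctorObjXIso (-1) (k + 1) k (by omega)).hom
            ((fst ψ).1.v k (k + 1) rfl x) = 0 := hx'
        have h3 := ConcreteCategory.congr_hom
          (X.shiftFunctorObjXIso (-1) (k + 1) k (by omega)).hom_inv_id
          ((fst ψ).1.v k (k + 1) rfl x)
        have h4 : (X.shiftFunctorObjXIso (-1) (k + 1) k (by omega)).inv
            ((X.shiftFunctorObjXIso (-1) (k + 1) k (by omega)).hom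
              ((fst ψ).1.v k (k + 1) rfl x)) = (fst ψ).1.v k (k + 1) rfl x := h3
        rw [← h4, h2, map_zero]
      have hid : (inl ψ).v (k + 1) k (by omega) ((fst ψ).1.v k (k + 1) rfl x)
          + (inr ψ).f k ((snd ψ).v k k (add_zero k) x) = x :=
        ConcreteCategory.congr_hom (id_X ψ k (k + 1) rfl) x
      refine ⟨(snd ψ).v k k (add_zero k) x, ?_⟩
      rw [hfst, map_zero, zero_add] at hid
      exact hid
  obtain ⟨r, hr⟩ := h n K i p hinj hsurj hex
  set γ : Cochain (X⟦(-1:ℤ)⟧) (I⟦n⟧) (-1) :=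
    (inl ψ).comp (Cochain.ofHom r) (add_zero (-1)) with hγdef
  have hγ : δ (-1) 0 γ = ZS.1 := by
    rw [hγdef, δ_comp_zero_cochain _ _ _ (neg_add_cancel 1), δ_ofHom, Cochain.comp_zero,
      zero_add, δ_inl, ← Cochain.ofHom_comp, Category.assoc, hr,
      Category.comp_id, hψdef, Cocycle.cochain_ofHom_homOf_eq_coe]
  set γ1 : Cochain (X⟦(-1:ℤ)⟧) I (n - 1) := γ.rightUnshift (n - 1) (by omega) with hγ1def
  have hγ1 : δ (n - 1) n γ1 = n.negOnePow • (ZL : Cochain (X⟦(-1:ℤ)⟧) I n) := by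
    rw [hγ1def, Cochain.δ_rightUnshift γ (n - 1) (by omega) n 0 (by omega), hγ]
    congr 1
    rw [hZSdef]
    exact Cochain.rightUnshift_rightShift _ _ _ _
  set y' : Cochain X I n := γ1.leftUnshift n (by omega) with hy'def
  have hy' : δ n (n + 1) y' = ((-1 : ℤ).negOnePow * n.negOnePow) • z := by
    rw [hy'def, Cochain.δ_leftUnshift γ1 n (by omega) (n + 1) n (by omega), hγ1,
      Cochain.leftUnshift_units_smul, smul_smul]
    congr 1
    rw [hZLdef]
    have := Cochain.leftUnshift_leftShift (K := X) (L := I) (γ := (Z : Cochain X I (n+1))) (-1) n (by omega)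
    exact this
  refine ⟨((-1 : ℤ).negOnePow * n.negOnePow) • y', ?_⟩
  rw [δ_units_smul, hy', smul_smul, Int.units_mul_self, one_smul]
end
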